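/- Let M = 2^(2λ) with λ ≥ 1, let S be the square M-QAM signal set with difference constellation ΔS, d_min(S) = 2, and let Γ_CI(S) = {z ∈ ℂ : |d + z·d'| ≥ min(d_min(S), |z|·d_min(S)) for all (d, d') ∈ ΔS × ΔS with (d, d') ≠ (0, 0)}. Let C_M = {α + β·i : α, β ∈ ℤ, |α| ≤ √M - 1, |β| ≤ √M - 1, max(|α|, |β|) = √M - 1} (a set of 8(√M - 1) points). Then every z ∈ Γ_CI(S) with |z| > 1 satisfies |z - c| ≥ 1 for every c ∈ C_M; that is, the exterior clustering-independent region Γ_CI(S) ∩ {|z| > 1} is contained in the intersection of the exteriors of the 8(√M - 1) unit circles centered at the points of C_M. -/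

import Mathlib

/-- For square `M`-QAM (`M = 2^(2λ)`, `d_min(S) = 2`), every `z` in the
clustering independent region `Γ_CI(S)` with `|z| > 1` lies in the exterior of each of
the `8(√M - 1)` unit circles centered at the points of
`C_M = {α + βi : α, β ∈ ℤ, |α| ≤ √M - 1, |β| ≤ √M - 1, max(|α|,|β|) = √M - 1}`. -/
theorem qam_exterior_clustering_independent_region (l : ℕ) (hl : 1 ≤ l)
    (S : Finset ℂ)
    (hS : S = ((Finset.range (2 ^ l)) ×ˢ (Finset.range (2 ^ l))).image
      (fun p : ℕ × ℕ =>
        (2 * (p.1 : ℂ) - ((2 : ℂ) ^ l - 1)) + (2 * (p.2 : ℂ) - ((2 : ℂ) ^ l - 1)) * Complex.I))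
    (ΔS : Finset ℂ)
    (hΔS : ΔS = (S ×ˢ S).image (fun p : ℂ × ℂ => p.1 - p.2))
    (Γ : Set ℂ)
    (hΓ : Γ = {z : ℂ | ∀ d ∈ ΔS, ∀ d' ∈ ΔS, ¬(d = 0 ∧ d' = 0) →
      min 2 (‖z‖ * 2) ≤ ‖d + z * d'‖})
    (C : Set ℂ)
    (hC : C = {c : ℂ | ∃ α β : ℤ, c = (α : ℂ) + (β : ℂ) * Complex.I ∧
      |α| ≤ 2 ^ l - 1 ∧ |β| ≤ 2 ^ l - 1 ∧ max |α| |β| = 2 ^ l - 1}) :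
    ∀ z ∈ Γ, 1 < ‖z‖ → ∀ c ∈ C, 1 ≤ ‖z - c‖ := by
  intro z hz hz1 c hc
  rw [hC] at hc
  obtain ⟨α, β, hceq, hα, hβ, -⟩ := hc
  rw [hΓ] at hz
  have h2cast : (((2 ^ l : ℕ) : ℤ)) = (2 : ℤ) ^ l := by push_cast; ring
  -- any 2a + 2b i with |a|,|b| ≤ 2^l - 1 is in ΔS
  have key : ∀ a b : ℤ, |a| ≤ 2 ^ l - 1 → |b| ≤ 2 ^ l - 1 →
      (2 * (a : ℂ) + 2 * (b : ℂ) * Complex.I) ∈ ΔS := by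
    intro a b ha hb
    have hNat : ∀ x : ℤ, |x| ≤ 2 ^ l - 1 →
        ∃ p q : ℕ, p < 2 ^ l ∧ q < 2 ^ l ∧ (p : ℤ) - q = x := by
      intro x hx
      rw [abs_le, ← h2cast] at hx
      exact ⟨x.toNat, (-x).toNat, by omega, by omega, by omega⟩
    obtain ⟨p1, q1, hp1, hq1, he1⟩ := hNat a ha
    obtain ⟨p2, q2, hp2, hq2, he2⟩ := hNat b hb
    have hmem : ∀ p1 p2 : ℕ, p1 < 2 ^ l → p2 < 2 ^ l →
        ((2 * (p1 : ℂ) - ((2 : ℂ) ^ l - 1)) + (2 * (p2 : ℂ) - ((2 : ℂ) ^ l - 1)) * Complex.I) ∈ S := by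
      intro p1 p2 hp1 hp2
      rw [hS]
      exact Finset.mem_image.mpr ⟨(p1, p2),
        Finset.mem_product.mpr ⟨Finset.mem_range.mpr hp1, Finset.mem_range.mpr hp2⟩, rfl⟩
    rw [hΔS]
    refine Finset.mem_image.mpr ⟨(
      (2 * (p1 : ℂ) - ((2 : ℂ) ^ l - 1)) + (2 * (p2 : ℂ) - ((2 : ℂ) ^ l - 1)) * Complex.I,
      (2 * (q1 : ℂ) - ((2 : ℂ) ^ l - 1)) + (2 * (q2 : ℂ) - ((2 : ℂ) ^ l - 1)) * Complex.I),
      Finset.mem_product.mpr ⟨hmem p1 p2 hp1 hp2, hmem q1 q2 hq1 hq2⟩, ?_⟩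
    have e1 : ((p1 : ℂ)) - q1 = (a : ℂ) := by exact_mod_cast congrArg (Int.cast : ℤ → ℂ) he1
    have e2 : ((p2 : ℂ)) - q2 = (b : ℂ) := by exact_mod_cast congrArg (Int.cast : ℤ → ℂ) he2
    simp only []
    rw [← e1, ← e2]
    ring
  have h1le : |(1 : ℤ)| ≤ 2 ^ l - 1 := by
    have : (2 : ℤ) ^ 1 ≤ 2 ^ l := pow_le_pow_right₀ (by norm_num) hl
    simp only [pow_one] at this
    rw [abs_one]; omega
  have h0le : |(0 : ℤ)| ≤ 2 ^ l - 1 := by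
    have : (2 : ℤ) ^ 1 ≤ 2 ^ l := pow_le_pow_right₀ (by norm_num) hl
    simp only [pow_one] at this
    rw [abs_zero]; omega
  have hd : (2 * ((-α : ℤ) : ℂ) + 2 * ((-β : ℤ) : ℂ) * Complex.I) ∈ ΔS :=
    key (-α) (-β) (by rwa [abs_neg]) (by rwa [abs_neg])
  have hd' : (2 * ((1 : ℤ) : ℂ) + 2 * ((0 : ℤ) : ℂ) * Complex.I) ∈ ΔS := key 1 0 h1le h0le
  have hne : ¬((2 * ((-α : ℤ) : ℂ) + 2 * ((-β : ℤ) : ℂ) * Complex.I) = 0 ∧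
      (2 * ((1 : ℤ) : ℂ) + 2 * ((0 : ℤ) : ℂ) * Complex.I) = 0) := by
    rintro ⟨-, h⟩
    norm_num at h
  have hmain := hz _ hd _ hd' hne
  have heq : (2 * ((-α : ℤ) : ℂ) + 2 * ((-β : ℤ) : ℂ) * Complex.I) +
      z * (2 * ((1 : ℤ) : ℂ) + 2 * ((0 : ℤ) : ℂ) * Complex.I) = 2 * (z - c) := by
    rw [hceq]; push_cast; ring
  rw [heq, norm_mul] at hmain
  have habs2 : ‖(2 : ℂ)‖ = 2 := by norm_num
  rw [habs2] at hmain
  have hmin : min (2 : ℝ) (‖z‖ * 2) = 2 := by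
    rw [min_eq_left]; nlinarith
  rw [hmin] at hmain
  linarith
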